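/- Let M be a finite set, v : M → ℝ with v_j > 0 for all j ∈ M, and x : M → [0,1]. Fix h > 0 with h ≠ v_j for every j ∈ M. Then the function h' ↦ g(x, h') is differentiable at h with derivative (1/h²)·( h − ∑_{j∈M} min(v_j, h)·x_j ). -/

import Mathlib

/-- The function `g(x, h)` from the paper:
`g(x,h) = (∑_{j : v j > h} x j * ln(v j / h)) + ln h + (1/h) * (∑_j min(v j, h) * x j) - 1`. -/
noncomputable def gNSW {ι : Type*} [Fintype ι] (v x : ι → ℝ) (h : ℝ) : ℝ :=
  (∑ j ∈ Finset.univ.filter (fun j => h < v j), x j * Real.log (v j / h))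
    + Real.log h + (1 / h) * (∑ j, min (v j) h * x j) - 1

/-- for `h > 0` with `h ≠ v_j` for every `j`, the map `h' ↦ g(x, h')` is
differentiable at `h` with derivative `(1/h²)·(h − ∑_j min(v_j, h)·x_j)`. -/
theorem stmt19 {ι : Type*} [Fintype ι] (v x : ι → ℝ)
    (hv : ∀ j, 0 < v j) (hx : ∀ j, x j ∈ Set.Icc (0 : ℝ) 1)
    (h : ℝ) (hh : 0 < h) (hne : ∀ j, h ≠ v j) :
    HasDerivAt (fun h' => gNSW v x h')
      ((1 / h ^ 2) * (h - ∑ j, min (v j) h * x j)) h := by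
  classical
  set S : Finset ι := Finset.univ.filter (fun j => h < v j) with hS
  set A : ℝ := ∑ j ∈ S, x j with hA
  set B : ℝ := ∑ j ∈ Finset.univ.filter (fun j => ¬ h < v j), v j * x j with hB
  set C : ℝ := ∑ j ∈ S, x j * Real.log (v j) with hC
  -- sum identity for any h' in the good region
  have hsum : ∀ h', (∀ j, if h < v j then h' < v j else v j < h') →
      ∑ j, min (v j) h' * x j = h' * A + B := by
    intro h' hj
    rw [← Finset.sum_filter_add_sum_filter_not Finset.univ (fun j => h < v j)
      (fun j => min (v j) h' * x j)]
    congr 1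
    · rw [hA, hS, Finset.mul_sum]
      apply Finset.sum_congr rfl
      intro j hjm
      have hjc : h < v j := (Finset.mem_filter.mp hjm).2
      have : h' < v j := by have := hj j; rwa [if_pos hjc] at this
      rw [min_eq_right this.le]
    · rw [hB]
      apply Finset.sum_congr rfl
      intro j hjm
      have hjc : ¬ h < v j := (Finset.mem_filter.mp hjm).2
      have : v j < h' := by have := hj j; rwa [if_neg hjc] at this
      rw [min_eq_left this.le]
  -- eventual equality with a nice function
  have hU : ∀ᶠ h' in nhds h, 0 < h' ∧ ∀ j, if h < v j then h' < v j else v j < h' := by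
    rw [Filter.eventually_and]
    refine ⟨eventually_gt_nhds hh, ?_⟩
    rw [Filter.eventually_all]
    intro j
    by_cases hjc : h < v j
    · simpa [hjc] using eventually_lt_nhds hjc
    · have hlt : v j < h := lt_of_le_of_ne (not_lt.mp hjc) (fun e => hne j e.symm)
      simpa [hjc] using eventually_gt_nhds hlt
  have key : ∀ h', 0 < h' → (∀ j, if h < v j then h' < v j else v j < h') →
      gNSW v x h' = C - A * Real.log h' + Real.log h' + A + B * h'⁻¹ - 1 := by
    intro h' h'pos hj
    have hfilter : Finset.univ.filter (fun j => h' < v j) = S := by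
      rw [hS]
      apply Finset.filter_congr
      intro j _
      constructor
      · intro hc
        by_contra hjc
        have : v j < h' := by have := hj j; rwa [if_neg hjc] at this
        exact absurd (this.trans hc) (lt_irrefl _)
      · intro hjc
        have := hj j; rwa [if_pos hjc] at this
    have hlog : ∀ j ∈ S, x j * Real.log (v j / h')
        = x j * Real.log (v j) - Real.log h' * x j := by
      intro j _
      rw [Real.log_div (hv j).ne' h'pos.ne']; ring
    rw [show gNSW v x h' = (∑ j ∈ Finset.univ.filter (fun j => h' < v j),
          x j * Real.log (v j / h')) + Real.log h'
          + (1 / h') * (∑ j, min (v j) h' * x j) - 1 from rfl,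
      hfilter, hsum h' hj, Finset.sum_congr rfl hlog, Finset.sum_sub_distrib,
      ← Finset.mul_sum, ← hA, ← hC]
    field_simp
    ring
  -- derivative of the nice function
  have hF : HasDerivAt (fun h' => C - A * Real.log h' + Real.log h' + A + B * h'⁻¹ - 1)
      (0 - A * h⁻¹ + h⁻¹ + 0 + B * (-(h ^ 2)⁻¹) - 0) h := by
    have l := Real.hasDerivAt_log hh.ne'
    have i := hasDerivAt_inv hh.ne'
    exact (((((hasDerivAt_const h C).sub (l.const_mul A)).add l).add
      (hasDerivAt_const h A)).add (i.const_mul B)).sub (hasDerivAt_const h 1)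
  have heq : (fun h' => gNSW v x h')
      =ᶠ[nhds h] (fun h' => C - A * Real.log h' + Real.log h' + A + B * h'⁻¹ - 1) :=
    hU.mono (fun h' hp => key h' hp.1 hp.2)
  have hAtH : ∑ j, min (v j) h * x j = h * A + B := by
    apply hsum h
    intro j
    by_cases hjc : h < v j
    · rwa [if_pos hjc]
    · rw [if_neg hjc]
      exact lt_of_le_of_ne (not_lt.mp hjc) (fun e => hne j e.symm)
  have := hF.congr_of_eventuallyEq heq
  refine this.congr_deriv ?_
  rw [hAtH]
  field_simp
  ring
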